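/- There exists a universal constant C > 0 with the following property. Let E be a real inner product space and let P, Q, R, S ∈ E be unit vectors; write d_{XY} := arccos⟨X,Y⟩ for the spherical distance between unit vectors X, Y. Then cos d_{PR} + cos d_{QS} ≥ −(1/2)(d_{PQ}² + d_{RS}²) + (1/4)(1 + cos d_{PS})(d_{QR} − d_{PS})² + cos d_{QR} + cos d_{PS} − C·(d_{PQ}³ + d_{RS}³ + |d_{QR} − d_{PS}|³). -/

import Mathlib

open scoped RealInnerProductSpace

private lemma aux_sub_sin (z : ℝ) (h0 : 0 ≤ z) (h2 : z ≤ Real.pi / 2) :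
    z - Real.sin z ≤ z ^ 3 / 2 := by
  rcases le_or_gt z 1 with h1 | h1
  · rcases eq_or_lt_of_le h0 with h | h
    · simp [← h]
    · have := Real.sin_gt_sub_cube h
      nlinarith [pow_nonneg h0 3]
  · -- 1 < z ≤ π/2 : sin z ≥ sin 1 ≥ 105/128 > π/4 ≥ z/2
    have hpi : Real.pi < 3.15 := Real.pi_lt_d2
    have hs1 : Real.sin 1 ≥ 105 / 128 := by
      have h12 : Real.sin (1 / 2 : ℝ) > 1 / 2 - (1 / 2 : ℝ) ^ 3 / 4 :=
        by have := Real.sin_gt_sub_cube (by norm_num : (0:ℝ) < 1 / 2); linarith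
      have hc12 : Real.cos (1 / 2 : ℝ) ≥ 1 - (1 / 2 : ℝ) ^ 2 / 2 :=
        Real.one_sub_sq_div_two_le_cos
      have h2m : Real.sin (2 * (1 / 2 : ℝ)) = 2 * Real.sin (1 / 2) * Real.cos (1 / 2) :=
        Real.sin_two_mul _
      have hc1 : Real.cos (1 / 2 : ℝ) ≤ 1 := Real.cos_le_one _
      have hs1' : Real.sin (1 / 2 : ℝ) ≤ 1 := Real.sin_le_one _
      norm_num at h2m
      rw [h2m]
      nlinarith
    have hmono : Real.sin 1 ≤ Real.sin z := by
      rcases eq_or_lt_of_le h1.le with h | h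
      · rw [← h]
      · exact (Real.strictMonoOn_sin ⟨by linarith [Real.pi_gt_three], by linarith⟩
          ⟨by linarith [Real.pi_gt_three], by linarith⟩ h).le
    have hz2 : Real.sin z ≥ z / 2 := by nlinarith
    have hz3 : z ≤ z ^ 3 := by
      nlinarith [mul_nonneg (by linarith : (0:ℝ) ≤ z) (by nlinarith : (0:ℝ) ≤ z ^ 2 - 1)]
    linarith

private lemma aux_sin_sq (z : ℝ) (h0 : 0 ≤ z) (h2 : z ≤ Real.pi / 2) :
    z ^ 2 - z ^ 4 ≤ Real.sin z ^ 2 := by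
  have h1 := aux_sub_sin z h0 h2
  have h3 : Real.sin z ≤ z := Real.sin_le h0
  have h4 : 0 ≤ Real.sin z := Real.sin_nonneg_of_nonneg_of_le_pi h0 (by linarith [Real.pi_pos])
  have h5 : (z - Real.sin z) * (z + Real.sin z) ≤ z ^ 3 / 2 * (2 * z) :=
    mul_le_mul h1 (by linarith) (by linarith) (by positivity)
  have h6 : z ^ 2 - Real.sin z ^ 2 = (z - Real.sin z) * (z + Real.sin z) := by ring
  have h7 : z ^ 3 / 2 * (2 * z) = z ^ 4 := by ring
  linarith

set_option maxHeartbeats 2000000 in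
private lemma aux_trig (c e : ℝ) (hc0 : 0 ≤ c) (hcp : c ≤ Real.pi)
    (he0 : 0 ≤ e) (hep : e ≤ Real.pi) :
    Real.cos (e / 2) ^ 2 * (c - e) ^ 2 - 2 * |c - e| ^ 3
      ≤ (2 * Real.sin (c / 2) - 2 * Real.sin (e / 2)) ^ 2 := by
  set t := c - e with ht
  have hT0 : 0 ≤ |t| := abs_nonneg t
  have hTpi : |t| ≤ Real.pi := abs_le.mpr ⟨by linarith, by linarith⟩
  -- identity
  have hid : 2 * Real.sin (c / 2) - 2 * Real.sin (e / 2)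
      = 2 * Real.sin (t / 2) * Real.cos (e / 2)
        - 4 * Real.sin (t / 4) ^ 2 * Real.sin (e / 2) := by
    have h1 : Real.sin (c / 2) - Real.sin (e / 2)
        = 2 * Real.sin ((c / 2 - e / 2) / 2) * Real.cos ((c / 2 + e / 2) / 2) :=
      Real.sin_sub_sin _ _
    have h2 : (c / 2 + e / 2) / 2 = e / 2 + t / 4 := by rw [ht]; ring
    have h3 : (c / 2 - e / 2) / 2 = t / 4 := by rw [ht]; ring
    have h4 : Real.cos (e / 2 + t / 4)
        = Real.cos (e / 2) * Real.cos (t / 4) - Real.sin (e / 2) * Real.sin (t / 4) :=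
      Real.cos_add _ _
    have h5 : Real.sin (t / 2) = 2 * Real.sin (t / 4) * Real.cos (t / 4) := by
      have := Real.sin_two_mul (t / 4)
      rw [show 2 * (t / 4) = t / 2 by ring] at this
      exact this
    have h7 : Real.sin (c / 2) - Real.sin (e / 2)
        = 2 * Real.sin (t / 4) * (Real.cos (e / 2) * Real.cos (t / 4)
            - Real.sin (e / 2) * Real.sin (t / 4)) := by
      rw [h1, h3, h2, h4]
    linear_combination (2 : ℝ) * h7 - 2 * Real.cos (e / 2) * h5
  -- bounds
  have hK2 : |t| ^ 2 / 4 - |t| ^ 4 / 16 ≤ Real.sin (t / 2) ^ 2 := by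
    have h := aux_sin_sq (|t| / 2) (by positivity) (by linarith)
    have hsq : Real.sin (|t| / 2) ^ 2 = Real.sin (t / 2) ^ 2 := by
      rcases abs_cases t with ⟨h1, _⟩ | ⟨h1, _⟩
      · rw [h1]
      · rw [h1, show -t / 2 = -(t / 2) by ring, Real.sin_neg]; ring
    nlinarith [h, hsq]
  have hKle : |Real.sin (t / 2)| ≤ |t| / 2 := by
    have := Real.abs_sin_le_abs (x := t / 2)
    rwa [abs_div, abs_two] at this
  have hK2le : Real.sin (t / 2) ^ 2 ≤ |t| ^ 2 / 4 := by
    nlinarith [hKle, abs_nonneg (Real.sin (t / 2)), sq_abs (Real.sin (t / 2)), sq_abs t]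
  have hm1 : Real.sin (t / 4) ^ 2 ≤ |t| ^ 2 / 16 := by
    have := Real.sin_sq_le_sq (x := t / 4)
    have h2 : (t / 4) ^ 2 = |t| ^ 2 / 16 := by rw [div_pow, sq_abs]; norm_num
    linarith [this, h2.ge, h2.le]
  have hm0 : 0 ≤ Real.sin (t / 4) ^ 2 := sq_nonneg _
  have hce0 : 0 ≤ Real.cos (e / 2) :=
    Real.cos_nonneg_of_mem_Icc ⟨by linarith [Real.pi_pos], by linarith⟩
  have hce1 : Real.cos (e / 2) ≤ 1 := Real.cos_le_one _
  have hse0 : 0 ≤ Real.sin (e / 2) :=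
    Real.sin_nonneg_of_nonneg_of_le_pi (by linarith) (by linarith [Real.pi_pos])
  have hse1 : Real.sin (e / 2) ≤ 1 := Real.sin_le_one _
  have ht2 : t ^ 2 = |t| ^ 2 := (sq_abs t).symm
  have hT4 : |t| ^ 4 ≤ 3.15 * |t| ^ 3 := by
    have := Real.pi_lt_d2
    nlinarith [pow_nonneg hT0 3]
  -- cross term bound
  have hKabs : -(|t| / 2) ≤ Real.sin (t / 2) ∧ Real.sin (t / 2) ≤ |t| / 2 := abs_le.mp hKle
  have hKm : -(|t| ^ 3 / 32) ≤ Real.sin (t / 2) * Real.sin (t / 4) ^ 2 := by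
    have f1 : (0:ℝ) ≤ (Real.sin (t / 2) + |t| / 2) * Real.sin (t / 4) ^ 2 :=
      mul_nonneg (by linarith [hKabs.1]) hm0
    have f2 : (0:ℝ) ≤ (|t| / 2) * (|t| ^ 2 / 16 - Real.sin (t / 4) ^ 2) :=
      mul_nonneg (by positivity) (by linarith)
    linarith [f1, f2]
  have hKmUp : Real.sin (t / 2) * Real.sin (t / 4) ^ 2 ≤ |t| ^ 3 / 32 := by
    have f1 : (0:ℝ) ≤ (|t| / 2 - Real.sin (t / 2)) * Real.sin (t / 4) ^ 2 :=
      mul_nonneg (by linarith [hKabs.2]) hm0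
    have f2 : (0:ℝ) ≤ (|t| / 2) * (|t| ^ 2 / 16 - Real.sin (t / 4) ^ 2) :=
      mul_nonneg (by positivity) (by linarith)
    linarith [f1, f2]
  have hc01 : 0 ≤ Real.cos (e / 2) * Real.sin (e / 2) := mul_nonneg hce0 hse0
  have hc11 : Real.cos (e / 2) * Real.sin (e / 2) ≤ 1 :=
    mul_le_one₀ hce1 hse0 hse1
  have hT3 : 0 ≤ |t| ^ 3 := pow_nonneg hT0 3
  have hKMabs : |Real.sin (t / 2) * Real.sin (t / 4) ^ 2 * (Real.cos (e / 2) * Real.sin (e / 2))|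
      ≤ |t| ^ 3 / 32 := by
    rw [abs_mul]
    have h1 : |Real.sin (t / 2) * Real.sin (t / 4) ^ 2| ≤ |t| ^ 3 / 32 :=
      abs_le.mpr ⟨hKm, hKmUp⟩
    have h2 : |Real.cos (e / 2) * Real.sin (e / 2)| ≤ 1 := by
      rw [abs_of_nonneg hc01]; exact hc11
    calc |Real.sin (t / 2) * Real.sin (t / 4) ^ 2| * |Real.cos (e / 2) * Real.sin (e / 2)|
        ≤ (|t| ^ 3 / 32) * 1 := mul_le_mul h1 h2 (abs_nonneg _) (by positivity)
      _ = |t| ^ 3 / 32 := by ring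
  have hcross : -(|t| ^ 3 / 32)
      ≤ Real.sin (t / 2) * Real.sin (t / 4) ^ 2 * (Real.cos (e / 2) * Real.sin (e / 2)) :=
    (abs_le.mp hKMabs).1
  have hcrossUp : Real.sin (t / 2) * Real.sin (t / 4) ^ 2 * (Real.cos (e / 2) * Real.sin (e / 2))
      ≤ |t| ^ 3 / 32 := (abs_le.mp hKMabs).2
  -- main term bound
  have hA : Real.cos (e / 2) ^ 2 * |t| ^ 2 - |t| ^ 4 / 4
      ≤ 4 * Real.sin (t / 2) ^ 2 * Real.cos (e / 2) ^ 2 := by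
    have f1 : (0:ℝ) ≤ (1 - Real.cos (e / 2) ^ 2) * (|t| ^ 2 / 4 - Real.sin (t / 2) ^ 2) := by
      apply mul_nonneg
      · nlinarith [hce0, hce1]
      · linarith
    linarith [f1, hK2]
  rw [hid]
  have hexp : (2 * Real.sin (t / 2) * Real.cos (e / 2)
        - 4 * Real.sin (t / 4) ^ 2 * Real.sin (e / 2)) ^ 2
      = 4 * Real.sin (t / 2) ^ 2 * Real.cos (e / 2) ^ 2
        - 16 * (Real.sin (t / 2) * Real.sin (t / 4) ^ 2 * (Real.cos (e / 2) * Real.sin (e / 2)))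
        + 16 * (Real.sin (t / 4) ^ 2 * Real.sin (e / 2)) ^ 2 := by ring
  have hcos2 : Real.cos (e / 2) ^ 2 * (c - e) ^ 2 = Real.cos (e / 2) ^ 2 * |t| ^ 2 := by
    rw [← ht, ht2]
  rw [hexp, hcos2]
  linarith [hA, hcross, hcrossUp, hT4, sq_nonneg (Real.sin (t / 4) ^ 2 * Real.sin (e / 2)), hT3]

theorem reshetnyak_diagonal_estimate :
    ∃ C : ℝ, 0 < C ∧
      ∀ (E : Type*) [NormedAddCommGroup E] [InnerProductSpace ℝ E]
        (P Q R S : E), ‖P‖ = 1 → ‖Q‖ = 1 → ‖R‖ = 1 → ‖S‖ = 1 →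
        Real.cos (Real.arccos ⟪P, R⟫) + Real.cos (Real.arccos ⟪Q, S⟫)
          ≥ -(1 / 2) * ((Real.arccos ⟪P, Q⟫) ^ 2 + (Real.arccos ⟪R, S⟫) ^ 2)
            + (1 / 4) * (1 + Real.cos (Real.arccos ⟪P, S⟫))
              * (Real.arccos ⟪Q, R⟫ - Real.arccos ⟪P, S⟫) ^ 2
            + Real.cos (Real.arccos ⟪Q, R⟫) + Real.cos (Real.arccos ⟪P, S⟫)
            - C * ((Real.arccos ⟪P, Q⟫) ^ 3 + (Real.arccos ⟪R, S⟫) ^ 3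
              + |Real.arccos ⟪Q, R⟫ - Real.arccos ⟪P, S⟫| ^ 3) := by
  refine ⟨1, one_pos, ?_⟩
  intro E _ _ P Q R S hP hQ hR hS
  -- inner products are in [-1, 1]
  have hb : ∀ X Y : E, ‖X‖ = 1 → ‖Y‖ = 1 → -1 ≤ ⟪X, Y⟫ ∧ ⟪X, Y⟫ ≤ 1 := by
    intro X Y hX hY
    have := abs_real_inner_le_norm X Y
    rw [hX, hY] at this
    exact abs_le.mp (by simpa using this)
  obtain ⟨hPQ1, hPQ2⟩ := hb P Q hP hQ
  obtain ⟨hRS1, hRS2⟩ := hb R S hR hS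
  obtain ⟨hPR1, hPR2⟩ := hb P R hP hR
  obtain ⟨hQS1, hQS2⟩ := hb Q S hQ hS
  obtain ⟨hQR1, hQR2⟩ := hb Q R hQ hR
  obtain ⟨hPS1, hPS2⟩ := hb P S hP hS
  rw [Real.cos_arccos hPR1 hPR2, Real.cos_arccos hQS1 hQS2,
    Real.cos_arccos hQR1 hQR2, Real.cos_arccos hPS1 hPS2]
  set a := Real.arccos ⟪P, Q⟫ with ha
  set b := Real.arccos ⟪R, S⟫ with hbb
  set c := Real.arccos ⟪Q, R⟫ with hc
  set e := Real.arccos ⟪P, S⟫ with he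
  have hca : ⟪P, Q⟫ = Real.cos a := (Real.cos_arccos hPQ1 hPQ2).symm
  have hcb : ⟪R, S⟫ = Real.cos b := (Real.cos_arccos hRS1 hRS2).symm
  have hcc : ⟪Q, R⟫ = Real.cos c := (Real.cos_arccos hQR1 hQR2).symm
  have hce : ⟪P, S⟫ = Real.cos e := (Real.cos_arccos hPS1 hPS2).symm
  have ha0 : 0 ≤ a := Real.arccos_nonneg _
  have hb0 : 0 ≤ b := Real.arccos_nonneg _
  have hc0 : 0 ≤ c := Real.arccos_nonneg _
  have he0 : 0 ≤ e := Real.arccos_nonneg _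
  have hcpi : c ≤ Real.pi := Real.arccos_le_pi _
  have hepi : e ≤ Real.pi := Real.arccos_le_pi _
  -- norms of the sides
  have hnorm : ∀ X Y : E, ‖X‖ = 1 → ‖Y‖ = 1 → ‖X - Y‖ ^ 2 = 2 - 2 * ⟪X, Y⟫ := by
    intro X Y hX hY
    rw [norm_sub_sq_real, hX, hY]; ring
  have hu : ‖P - Q‖ ^ 2 = 2 - 2 * ⟪P, Q⟫ := hnorm P Q hP hQ
  have hv : ‖R - S‖ ^ 2 = 2 - 2 * ⟪R, S⟫ := hnorm R S hR hS
  have hx : ‖P - S‖ ^ 2 = 2 - 2 * ⟪P, S⟫ := hnorm P S hP hS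
  have hy : ‖Q - R‖ ^ 2 = 2 - 2 * ⟪Q, R⟫ := hnorm Q R hQ hR
  -- side norms bounded by angles
  have huA : ‖P - Q‖ ^ 2 ≤ a ^ 2 := by
    have := Real.one_sub_sq_div_two_le_cos (x := a); rw [hu, hca]; linarith
  have hvB : ‖R - S‖ ^ 2 ≤ b ^ 2 := by
    have := Real.one_sub_sq_div_two_le_cos (x := b); rw [hv, hcb]; linarith
  -- ‖P - S‖ = 2 sin (e/2), ‖Q - R‖ = 2 sin (c/2)
  have hsinhalf : ∀ θ : ℝ, 0 ≤ θ → θ ≤ Real.pi → Real.sin (θ / 2) ^ 2 = 1 / 2 - Real.cos θ / 2 := by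
    intro θ _ _
    have h1 := Real.sin_sq_add_cos_sq (θ / 2)
    have h2 := Real.cos_sq (θ / 2)
    rw [show 2 * (θ / 2) = θ by ring] at h2
    linarith
  have hnormval : ∀ (X Y : E) (θ : ℝ), ‖X - Y‖ ^ 2 = 2 - 2 * Real.cos θ → 0 ≤ θ → θ ≤ Real.pi →
      ‖X - Y‖ = 2 * Real.sin (θ / 2) := by
    intro X Y θ hXY h0 hpi
    have hs := hsinhalf θ h0 hpi
    have hsq : ‖X - Y‖ ^ 2 = (2 * Real.sin (θ / 2)) ^ 2 := by
      rw [hXY]; linear_combination (-4 : ℝ) * hs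
    have h1 : 0 ≤ Real.sin (θ / 2) :=
      Real.sin_nonneg_of_nonneg_of_le_pi (by linarith) (by linarith [Real.pi_pos])
    calc ‖X - Y‖ = Real.sqrt (‖X - Y‖ ^ 2) := (Real.sqrt_sq (norm_nonneg _)).symm
      _ = Real.sqrt ((2 * Real.sin (θ / 2)) ^ 2) := by rw [hsq]
      _ = 2 * Real.sin (θ / 2) := Real.sqrt_sq (by linarith)
  have hxe : ‖P - S‖ = 2 * Real.sin (e / 2) :=
    hnormval P S e (by rw [hx, hce]) he0 hepi
  have hyc : ‖Q - R‖ = 2 * Real.sin (c / 2) :=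
    hnormval Q R c (by rw [hy, hcc]) hc0 hcpi
  -- triangle inequality for norms
  have hxy : (P - S) - (Q - R) = (P - Q) + (R - S) := by abel
  have htri : |‖P - S‖ - ‖Q - R‖| ≤ ‖(P - Q) + (R - S)‖ := by
    rw [← hxy]; exact abs_norm_sub_norm_le _ _
  have hsqtri : (2 * Real.sin (c / 2) - 2 * Real.sin (e / 2)) ^ 2 ≤ ‖(P - Q) + (R - S)‖ ^ 2 := by
    have h1 : (2 * Real.sin (c / 2) - 2 * Real.sin (e / 2)) ^ 2
        = |‖P - S‖ - ‖Q - R‖| ^ 2 := by rw [sq_abs, hxe, hyc]; ring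
    rw [h1]
    exact pow_le_pow_left₀ (abs_nonneg _) htri 2
  -- polarization
  have hpol : ‖(P - Q) + (R - S)‖ ^ 2
      = ‖P - Q‖ ^ 2 + 2 * ⟪P - Q, R - S⟫ + ‖R - S‖ ^ 2 := norm_add_sq_real _ _
  have hinner : ⟪P - Q, R - S⟫ = ⟪P, R⟫ - ⟪P, S⟫ - ⟪Q, R⟫ + ⟪Q, S⟫ := by
    simp only [inner_sub_left, inner_sub_right]; ring
  -- main trig estimate
  have hmain := aux_trig c e hc0 hcpi he0 hepi
  -- half-angle for the (1 + cos e) factor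
  have hhalf : 1 + ⟪P, S⟫ = 2 * Real.cos (e / 2) ^ 2 := by
    have h2 := Real.cos_sq (e / 2)
    rw [show 2 * (e / 2) = e by ring] at h2
    rw [hce]; linarith
  have ha3 : 0 ≤ a ^ 3 := pow_nonneg ha0 3
  have hb3 : 0 ≤ b ^ 3 := pow_nonneg hb0 3
  have hkey : Real.cos (e / 2) ^ 2 * (c - e) ^ 2 - 2 * |c - e| ^ 3 - a ^ 2 - b ^ 2
      ≤ 2 * ⟪P - Q, R - S⟫ := by
    have h1 : Real.cos (e / 2) ^ 2 * (c - e) ^ 2 - 2 * |c - e| ^ 3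
        ≤ ‖(P - Q) + (R - S)‖ ^ 2 := le_trans hmain hsqtri
    linarith [hpol, huA, hvB]
  rw [ge_iff_le, hhalf]
  have habs3 : 0 ≤ |c - e| ^ 3 := pow_nonneg (abs_nonneg _) 3
  have hfin : (1 / 4 : ℝ) * (2 * Real.cos (e / 2) ^ 2) * (c - e) ^ 2
      = Real.cos (e / 2) ^ 2 * (c - e) ^ 2 / 2 := by ring
  linarith [hkey, hinner, ha3, hb3, habs3, hfin]
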